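/- Let X be a compact Hausdorff space, φ : X → X a continuous surjection, and L : C(X) → C(X) a transfer operator of finite type for the endomorphism α_φ(a) = a ∘ φ. Then L is faithful (L(a*·a) = 0 implies a = 0), φ is a surjective local homeomorphism, and φ is the unique continuous map inducing an endomorphism for which L is a transfer operator: if ψ : X → X is continuous and L is also a transfer operator for the endomorphism a ↦ a ∘ ψ, then ψ = φ. -/

import Mathlib

open scoped ComplexOrder

/-- `L` is a (unital, positive) transfer operator for the endomorphism
`a ↦ a ∘ φ` of `C(X, ℂ)`. -/
def IsTransferOpC {X : Type*} [TopologicalSpace X] (φ : C(X, X))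
    (L : C(X, ℂ) →ₗ[ℂ] C(X, ℂ)) : Prop :=
  L 1 = 1 ∧ (∀ f : C(X, ℂ), (∀ x, 0 ≤ f x) → ∀ x, 0 ≤ (L f) x) ∧
    ∀ f g : C(X, ℂ), L (f.comp φ * g) = f * L g

namespace Stmt6Aux
variable {X : Type*} [TopologicalSpace X] [CompactSpace X] [T2Space X]

noncomputable def cmplx (g : C(X, ℝ)) : C(X, ℂ) :=
  ⟨fun y => (g y : ℂ), Complex.continuous_ofReal.comp g.continuous⟩

@[simp] lemma cmplx_apply (g : C(X, ℝ)) (y : X) : cmplx g y = (g y : ℂ) := rfl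

lemma cmplx_sub (g h : C(X, ℝ)) : cmplx (g - h) = cmplx g - cmplx h := by
  ext y; simp

lemma cmplx_add (g h : C(X, ℝ)) : cmplx (g + h) = cmplx g + cmplx h := by
  ext y; simp

lemma habs (L : C(X, ℂ) →ₗ[ℂ] C(X, ℂ))
    (hpos : ∀ f : C(X, ℂ), (∀ x, 0 ≤ f x) → ∀ x, 0 ≤ (L f) x)
    (x : X) (r m : C(X, ℝ)) (hb : ∀ y, |r y| ≤ m y) :
    ‖L (cmplx r) x‖ ≤ ‖L (cmplx m) x‖ := by
  have h1 : 0 ≤ L (cmplx (m - r)) x := by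
    refine hpos _ (fun y => ?_) x
    simp only [cmplx_apply, ContinuousMap.sub_apply]
    rw [Complex.zero_le_real]
    have := abs_le.mp (hb y); linarith
  have h2 : 0 ≤ L (cmplx (m + r)) x := by
    refine hpos _ (fun y => ?_) x
    simp only [cmplx_apply, ContinuousMap.add_apply]
    rw [Complex.zero_le_real]
    have := abs_le.mp (hb y); linarith
  rw [cmplx_sub, map_sub] at h1
  rw [cmplx_add, map_add] at h2
  set a := L (cmplx r) x with ha
  set b := L (cmplx m) x with hbb
  have h1' : (0 : ℂ) ≤ b - a := by simpa using h1
  have h2' : (0 : ℂ) ≤ b + a := by simpa using h2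
  rw [Complex.le_def] at h1' h2'
  simp only [Complex.zero_re, Complex.zero_im, Complex.sub_re, Complex.sub_im,
    Complex.add_re, Complex.add_im] at h1' h2'
  have haim : a.im = 0 := by linarith [h1'.2, h2'.2]
  have hbim : b.im = 0 := by linarith [h1'.2, h2'.2]
  have : ‖a‖ = |a.re| := by
    rw [Complex.norm_def, Complex.normSq_apply, haim]
    simp [Real.sqrt_mul_self_eq_abs]
  rw [this]
  have : ‖b‖ = |b.re| := by
    rw [Complex.norm_def, Complex.normSq_apply, hbim]
    simp [Real.sqrt_mul_self_eq_abs]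
  rw [this]
  have hb0 : (0:ℝ) ≤ b.re := by linarith [h1'.1, h2'.1, abs_nonneg a.re, neg_abs_le a.re, le_abs_self a.re]
  rw [abs_of_nonneg hb0, abs_le]
  constructor <;> linarith [h1'.1, h2'.1]


/-- real part as a real continuous map -/
noncomputable def reP (f : C(X, ℂ)) : C(X, ℝ) :=
  ⟨fun y => (f y).re, Complex.continuous_re.comp f.continuous⟩

noncomputable def imP (f : C(X, ℂ)) : C(X, ℝ) :=
  ⟨fun y => (f y).im, Complex.continuous_im.comp f.continuous⟩

lemma hcomplex (L : C(X, ℂ) →ₗ[ℂ] C(X, ℂ))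
    (hpos : ∀ f : C(X, ℂ), (∀ x, 0 ≤ f x) → ∀ x, 0 ≤ (L f) x)
    (x : X) (f : C(X, ℂ)) (m : C(X, ℝ)) (hb : ∀ y, ‖f y‖ ≤ m y) :
    ‖L f x‖ ≤ 2 * ‖L (cmplx m) x‖ := by
  have hf : f = cmplx (reP f) + Complex.I • cmplx (imP f) := by
    ext y
    simp only [ContinuousMap.add_apply, ContinuousMap.smul_apply, cmplx_apply, smul_eq_mul, reP,
      imP, ContinuousMap.coe_mk]
    rw [mul_comm, Complex.re_add_im]
  have h1 : ‖L (cmplx (reP f)) x‖ ≤ ‖L (cmplx m) x‖ := by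
    refine habs L hpos x _ _ (fun y => ?_)
    refine le_trans ?_ (hb y)
    simpa [reP] using Complex.abs_re_le_norm (f y)
  have h2 : ‖L (cmplx (imP f)) x‖ ≤ ‖L (cmplx m) x‖ := by
    refine habs L hpos x _ _ (fun y => ?_)
    refine le_trans ?_ (hb y)
    simpa [imP] using Complex.abs_im_le_norm (f y)
  have hLf : L f x = L (cmplx (reP f)) x + Complex.I * L (cmplx (imP f)) x := by
    conv_lhs => rw [hf]
    rw [map_add, map_smul]
    simp [smul_eq_mul]
  calc ‖L f x‖ = ‖L (cmplx (reP f)) x + Complex.I * L (cmplx (imP f)) x‖ := by rw [hLf]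
    _ ≤ ‖L (cmplx (reP f)) x‖ + ‖Complex.I * L (cmplx (imP f)) x‖ := norm_add_le _ _
    _ ≤ ‖L (cmplx m) x‖ + ‖L (cmplx m) x‖ := by
        rw [norm_mul, Complex.norm_I, one_mul]; exact add_le_add h1 h2
    _ = 2 * ‖L (cmplx m) x‖ := by ring


lemma Lsupp (φ : C(X, X)) (L : C(X, ℂ) →ₗ[ℂ] C(X, ℂ))
    (htr : ∀ f g : C(X, ℂ), L (f.comp φ * g) = f * L g)
    (x : X) (f : C(X, ℂ)) (hd : ∀ y, φ y = x → y ∉ tsupport ⇑f) :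
    L f x = 0 := by
  set K : Set X := tsupport ⇑f with hK
  have hKc : IsClosed K := isClosed_tsupport _
  have hKim : IsClosed (⇑φ '' K) := (hKc.isCompact.image φ.continuous).isClosed
  have hx : x ∉ ⇑φ '' K := by
    rintro ⟨y, hy, rfl⟩
    exact hd y rfl hy
  obtain ⟨g, hg0, hg1, -⟩ := exists_continuous_zero_one_of_isClosed hKim
    isClosed_singleton (Set.disjoint_singleton_right.mpr hx)
  have key : (cmplx g).comp φ * f = 0 := by
    ext y
    simp only [ContinuousMap.mul_apply, ContinuousMap.comp_apply, cmplx_apply,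
      ContinuousMap.zero_apply]
    by_cases hy : f y = 0
    · rw [hy, mul_zero]
    · have : y ∈ K := subset_tsupport _ hy
      rw [hg0 (Set.mem_image_of_mem _ this)]
      simp
  have := htr (cmplx g) f
  rw [key, map_zero] at this
  have := congrArg (fun h : C(X, ℂ) => h x) this
  simp only [ContinuousMap.zero_apply, ContinuousMap.mul_apply, cmplx_apply] at this
  rw [hg1 rfl] at this
  simpa using this.symm

lemma Lfiber (φ : C(X, X)) (L : C(X, ℂ) →ₗ[ℂ] C(X, ℂ))
    (htr : ∀ f g : C(X, ℂ), L (f.comp φ * g) = f * L g)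
    (hone : L 1 = 1)
    (hpos : ∀ f : C(X, ℂ), (∀ x, 0 ≤ f x) → ∀ x, 0 ≤ (L f) x)
    (x : X) (f : C(X, ℂ)) (h0 : ∀ y, φ y = x → f y = 0) :
    L f x = 0 := by
  have key : ∀ ε : ℝ, 0 < ε → ‖L f x‖ ≤ 2 * ε := by
    intro ε hε
    set S : Set X := ⇑φ ⁻¹' {x} with hS
    have hScl : IsClosed S := (isClosed_singleton).preimage φ.continuous
    set O : Set X := {y | ‖f y‖ < ε} with hO
    have hOop : IsOpen O := by
      have : Continuous fun y => ‖f y‖ := f.continuous.norm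
      exact isOpen_lt this continuous_const
    have hSO : S ⊆ O := by
      intro y hy
      simp only [hO, Set.mem_setOf_eq]
      rw [h0 y hy, norm_zero]; exact hε
    obtain ⟨v, hvop, hSv, hvO⟩ := normal_exists_closure_subset hScl hOop hSO
    obtain ⟨h, h0', h1', hicc⟩ := exists_continuous_zero_one_of_isClosed
      (isClosed_compl_iff.mpr hOop) isClosed_closure
      (by rw [Set.disjoint_left]; intro z hz hz2; exact hz (hvO hz2))
    set hc := cmplx h with hhc
    have hsplit : f = f * hc + f * (1 - hc) := by ring
    have hzero : L (f * (1 - hc)) x = 0 := by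
      refine Lsupp φ L htr x _ (fun y hy => ?_)
      have hsub : {z | (f * (1 - hc)) z ≠ 0} ⊆ vᶜ := by
        intro z hz hzv
        apply hz
        have : h z = 1 := h1' (subset_closure hzv)
        simp [hhc, this]
      have : tsupport ⇑(f * (1 - hc)) ⊆ vᶜ :=
        closure_minimal hsub (isClosed_compl_iff.mpr hvop)
      intro hmem
      exact (this hmem) (hSv hy)
    have hbound : ‖L (f * hc) x‖ ≤ 2 * ε := by
      have := hcomplex L hpos x (f * hc) (ContinuousMap.const X ε) (fun y => ?_)
      · refine le_trans this ?_
        have : cmplx (ContinuousMap.const X ε) = (ε : ℂ) • 1 := by ext y; simp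
        rw [this, map_smul]
        simp only [hone, ContinuousMap.smul_apply, ContinuousMap.one_apply, smul_eq_mul, mul_one]
        rw [Complex.norm_real, Real.norm_of_nonneg hε.le]
      · simp only [ContinuousMap.mul_apply, ContinuousMap.const_apply, hhc, cmplx_apply]
        by_cases hyO : y ∈ O
        · have h1 : ‖f y‖ < ε := hyO
          have h2 : |h y| ≤ 1 := by
            have := hicc y; rw [abs_le]; constructor <;> [linarith [this.1]; exact this.2]
          calc ‖f y * (h y : ℂ)‖ = ‖f y‖ * |h y| := by
                rw [norm_mul, Complex.norm_real, Real.norm_eq_abs]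
            _ ≤ ε * 1 := by
                apply mul_le_mul h1.le h2 (abs_nonneg _) hε.le
            _ = ε := mul_one ε
        · have : h y = 0 := h0' hyO
          rw [this]; simp [hε.le]
    calc ‖L f x‖ = ‖L (f * hc) x + L (f * (1 - hc)) x‖ := by
          conv_lhs => rw [hsplit]
          rw [map_add]; simp
      _ = ‖L (f * hc) x‖ := by rw [hzero, add_zero]
      _ ≤ 2 * ε := hbound
  by_contra hne
  have hpos' : 0 < ‖L f x‖ := norm_pos_iff.mpr hne
  have := key (‖L f x‖ / 4) (by linarith)
  linarith

lemma Leq (φ : C(X, X)) (L : C(X, ℂ) →ₗ[ℂ] C(X, ℂ))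
    (htr : ∀ f g : C(X, ℂ), L (f.comp φ * g) = f * L g)
    (hone : L 1 = 1)
    (hpos : ∀ f : C(X, ℂ), (∀ x, 0 ≤ f x) → ∀ x, 0 ≤ (L f) x)
    (x : X) (f g : C(X, ℂ)) (h : ∀ y, φ y = x → f y = g y) :
    L f x = L g x := by
  have := Lfiber φ L htr hone hpos x (f - g) (fun y hy => by
    simp only [ContinuousMap.sub_apply]; rw [h y hy, sub_self])
  rw [map_sub] at this
  simp only [ContinuousMap.sub_apply] at this
  exact sub_eq_zero.mp this


lemma peak (φ : C(X, X)) (x p : X) (hfin : ((⇑φ) ⁻¹' {x}).Finite)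
    (V : Set X) (hV : IsOpen V) (hpV : p ∈ V) :
    ∃ f : C(X, ℂ), f p = 1 ∧ (∀ y, φ y = x → y ≠ p → f y = 0) ∧ ∀ y, y ∉ V → f y = 0 := by
  set s : Set X := ((⇑φ) ⁻¹' {x} \ {p}) ∪ Vᶜ with hs
  have hscl : IsClosed s :=
    IsClosed.union (hfin.diff).isClosed (isClosed_compl_iff.mpr hV)
  have hdisj : Disjoint s {p} := by
    rw [Set.disjoint_right]
    rintro z rfl
    intro hmem
    rcases hmem with h | h
    · exact h.2 rfl
    · exact h hpV
  obtain ⟨g, hg0, hg1, -⟩ := exists_continuous_zero_one_of_isClosed hscl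
    isClosed_singleton hdisj
  refine ⟨cmplx g, ?_, ?_, ?_⟩
  · simp [hg1 rfl]
  · intro y hy hne
    have : y ∈ s := Or.inl ⟨hy, hne⟩
    simp [hg0 this]
  · intro y hy
    have : y ∈ s := Or.inr hy
    simp [hg0 this]

lemma gkey (φ : C(X, X)) (L : C(X, ℂ) →ₗ[ℂ] C(X, ℂ))
    (htr : ∀ f g : C(X, ℂ), L (f.comp φ * g) = f * L g)
    (hone : L 1 = 1)
    (hpos : ∀ f : C(X, ℂ), (∀ x, 0 ≤ f x) → ∀ x, 0 ≤ (L f) x)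
    {N : ℕ} {u : Fin N → C(X, ℂ)}
    (hqb : ∀ a : C(X, ℂ), a = ∑ i, u i * ((L (star (u i) * a)).comp φ))
    (x p : X) (hp : φ p = x) (f : C(X, ℂ)) (hf1 : f p = 1)
    (hf0 : ∀ y, φ y = x → y ≠ p → f y = 0) (a : X) (ha : φ a = x) :
    (∑ i, u i a * (starRingEnd ℂ) (u i p)) * L f x = f a := by
  have hstar : ∀ i, L (star (u i) * f) x = (starRingEnd ℂ) (u i p) * L f x := by
    intro i
    have := Leq φ L htr hone hpos x (star (u i) * f) ((starRingEnd ℂ) (u i p) • f)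
      (fun y hy => by
        by_cases hyp : y = p
        · subst hyp
          simp [hf1]
        · simp [hf0 y hy hyp])
    rw [this, map_smul]
    simp
  have := congrArg (fun h : C(X, ℂ) => h a) (hqb f)
  simp only [ContinuousMap.sum_apply, ContinuousMap.mul_apply,
    ContinuousMap.comp_apply, ha] at this
  rw [this]
  rw [Finset.sum_mul]
  apply Finset.sum_congr rfl
  intro i _
  rw [hstar i]
  ring


lemma delta_fun (z : X) (T : Set X) (hT : T.Finite) (hzT : z ∉ T) :
    ∃ f : C(X, ℂ), f z = 1 ∧ ∀ w ∈ T, f w = 0 := by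
  obtain ⟨g, hg0, hg1, -⟩ := exists_continuous_zero_one_of_isClosed hT.isClosed
    isClosed_singleton (Set.disjoint_singleton_right.mpr hzT)
  refine ⟨cmplx g, by simp [hg1 rfl], fun w hw => by simp [hg0 hw]⟩

lemma fiber_finite (φ : C(X, X)) (L : C(X, ℂ) →ₗ[ℂ] C(X, ℂ))
    {N : ℕ} {u : Fin N → C(X, ℂ)}
    (hqb : ∀ a : C(X, ℂ), a = ∑ i, u i * ((L (star (u i) * a)).comp φ))
    (x : X) : ((⇑φ) ⁻¹' {x}).Finite := by
  by_contra hinf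
  obtain ⟨t, hts, htf, htc⟩ := Set.Infinite.exists_subset_ncard_eq hinf (N + 1)
  classical
  have hcard : htf.toFinset.card = N + 1 := by
    rw [← Set.ncard_eq_toFinset_card t htf]
    exact htc
  set e := Finset.equivFinOfCardEq hcard with he
  set z : Fin (N + 1) → X := fun j => (e.symm j : X) with hz
  have hzt : ∀ j, z j ∈ t := by
    intro j
    exact htf.mem_toFinset.mp (e.symm j).2
  have hzinj : Function.Injective z := by
    intro a b hab
    have : (e.symm a : {x // x ∈ htf.toFinset}) = e.symm b := Subtype.ext hab
    simpa using congrArg e this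
  have hzfib : ∀ j, φ (z j) = x := by
    intro j
    have := hts (hzt j)
    simpa using this
  have hdelta : ∀ j : Fin (N + 1), ∃ f : C(X, ℂ), f (z j) = 1 ∧
      ∀ l, l ≠ j → f (z l) = 0 := by
    intro j
    obtain ⟨f, hf1, hf0⟩ := delta_fun (z j) (t \ {z j}) (htf.diff)
      (fun h => h.2 rfl)
    exact ⟨f, hf1, fun l hl => hf0 _ ⟨hzt l, fun hh => hl (hzinj hh)⟩⟩
  choose f hf1 hf0 using hdelta
  set V : Matrix (Fin (N + 1)) (Fin N) ℂ := fun l i => u i (z l) with hV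
  set W : Matrix (Fin N) (Fin (N + 1)) ℂ := fun i j => L (star (u i) * f j) x with hW
  have hVW : V * W = 1 := by
    ext l j
    rw [Matrix.mul_apply, Matrix.one_apply]
    have := congrArg (fun h : C(X, ℂ) => h (z l)) (hqb (f j))
    simp only [ContinuousMap.sum_apply, ContinuousMap.mul_apply,
      ContinuousMap.comp_apply, hzfib l] at this
    rw [← this]
    by_cases hlj : l = j
    · subst hlj; simp [hf1]
    · simp [hf0 j l (fun h => hlj h), hlj]
  have hrk : (N + 1 : ℕ) ≤ N := by
    have h1 : (1 : Matrix (Fin (N + 1)) (Fin (N + 1)) ℂ).rank = N + 1 := by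
      rw [Matrix.rank_one]; simp
    calc (N + 1 : ℕ) = (V * W).rank := by rw [hVW, h1]
      _ ≤ V.rank := Matrix.rank_mul_le_left V W
      _ ≤ Fintype.card (Fin N) := V.rank_le_card_width
      _ = N := Fintype.card_fin N
  omega

end Stmt6Aux

open Stmt6Aux

/-- a transfer operator of finite type for `α_φ` is faithful, `φ` is a
(surjective) local homeomorphism, and `φ` is the unique continuous map inducing an
endomorphism for which `L` is a transfer operator. -/
theorem stmt6 {X : Type*} [TopologicalSpace X] [CompactSpace X] [T2Space X]
    (φ : C(X, X)) (hsurj : Function.Surjective φ)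
    (L : C(X, ℂ) →ₗ[ℂ] C(X, ℂ)) (hL : IsTransferOpC φ L)
    (hfin : ∃ (N : ℕ) (u : Fin N → C(X, ℂ)),
        ∀ a : C(X, ℂ), a = ∑ i, u i * ((L (star (u i) * a)).comp φ)) :
    (∀ a : C(X, ℂ), L (star a * a) = 0 → a = 0) ∧
    IsLocalHomeomorph (⇑φ) ∧
    (∀ ψ : C(X, X), IsTransferOpC ψ L → ψ = φ) := by

  classical
  obtain ⟨hone, hpos, htr⟩ := hL
  obtain ⟨N, u, hqb⟩ := hfin
  have hfinfib : ∀ x : X, ((⇑φ) ⁻¹' {x}).Finite := fun x => fiber_finite φ L hqb x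
  -- peak functions with nonvanishing weight
  have hpeak : ∀ (p : X) (V : Set X), IsOpen V → p ∈ V →
      ∃ f : C(X, ℂ), f p = 1 ∧ (∀ y, φ y = φ p → y ≠ p → f y = 0) ∧
        (∀ y, y ∉ V → f y = 0) ∧ L f (φ p) ≠ 0 := by
    intro p V hV hpV
    obtain ⟨f, hf1, hf0, hfV⟩ := peak φ (φ p) p (hfinfib _) V hV hpV
    refine ⟨f, hf1, hf0, hfV, ?_⟩
    have hg := gkey φ L htr hone hpos hqb (φ p) p rfl f hf1 hf0 p rfl
    rw [hf1] at hg
    intro h0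
    rw [h0, mul_zero] at hg
    exact one_ne_zero hg.symm
  -- faithfulness
  have hfaith : ∀ a : C(X, ℂ), L (star a * a) = 0 → a = 0 := by
    intro a hA
    have hz : ∀ i, L (star (u i) * a) = 0 := by
      intro i
      ext x
      rw [ContinuousMap.zero_apply]
      set b := u i with hb
      set C := ‖L (star b * b) x‖ with hC
      have key : ∀ t : ℝ, 0 < t → ‖L (star b * a) x‖ ≤ t * C := by
        intro t ht
        set mt : C(X, ℝ) := ⟨fun y => t / 2 * ‖b y‖ ^ 2 + 1 / (2 * t) * ‖a y‖ ^ 2,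
          ((continuous_const.mul ((b.continuous.norm).pow 2)).add
            (continuous_const.mul ((a.continuous.norm).pow 2)))⟩ with hmtdef
        have hmt : cmplx mt = ((t / 2 : ℝ) : ℂ) • (star b * b) +
            ((1 / (2 * t) : ℝ) : ℂ) • (star a * a) := by
          ext y
          simp only [cmplx_apply, ContinuousMap.add_apply, ContinuousMap.smul_apply,
            ContinuousMap.mul_apply, ContinuousMap.coe_mk, smul_eq_mul, hmtdef,
            ContinuousMap.star_apply, Complex.star_def]
          rw [← Complex.normSq_eq_conj_mul_self, ← Complex.normSq_eq_conj_mul_self]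
          norm_cast
          simp [Complex.normSq_eq_norm_sq]
        have hbd : ∀ y, ‖(star b * a) y‖ ≤ mt y := by
          intro y
          simp only [ContinuousMap.mul_apply, ContinuousMap.star_apply, hmtdef,
            ContinuousMap.coe_mk]
          rw [norm_mul, norm_star]
          have hid : t / 2 * ‖b y‖ ^ 2 + 1 / (2 * t) * ‖a y‖ ^ 2 - ‖b y‖ * ‖a y‖ =
              (t * ‖b y‖ - ‖a y‖) ^ 2 / (2 * t) := by
            field_simp
            ring
          have hnn : (0:ℝ) ≤ (t * ‖b y‖ - ‖a y‖) ^ 2 / (2 * t) :=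
            div_nonneg (sq_nonneg _) (by linarith)
          linarith
        have h1 := hcomplex L hpos x (star b * a) mt hbd
        have h2 : L (cmplx mt) x = ((t / 2 : ℝ) : ℂ) * L (star b * b) x := by
          rw [hmt, map_add, map_smul, map_smul, hA]
          simp
        rw [h2] at h1
        calc ‖L (star b * a) x‖ ≤ 2 * ‖((t / 2 : ℝ) : ℂ) * L (star b * b) x‖ := h1
          _ = t * C := by
              rw [norm_mul, Complex.norm_real, Real.norm_of_nonneg (by positivity)]
              ring
      have hle : ‖L (star b * a) x‖ ≤ 0 := by
        by_contra hlt
        push_neg at hlt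
        have hC0 : 0 ≤ C := norm_nonneg _
        have := key (‖L (star b * a) x‖ / (2 * (C + 1))) (by positivity)
        have h2 : ‖L (star b * a) x‖ / (2 * (C + 1)) * C < ‖L (star b * a) x‖ := by
          rw [div_mul_eq_mul_div, div_lt_iff₀ (by positivity)]
          nlinarith
        linarith
      have := le_antisymm hle (norm_nonneg _)
      exact norm_eq_zero.mp this
    have := hqb a
    simp only [hz] at this
    simpa using this
  refine ⟨hfaith, ?_, ?_⟩
  -- local homeomorphism
  · have hopen : IsOpenMap ⇑φ := by
      intro V hV
      rw [isOpen_iff_forall_mem_open]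
      rintro x ⟨y0, hy0, rfl⟩
      obtain ⟨f, hf1, hf0, hfV, hρ⟩ := hpeak y0 V hV hy0
      refine ⟨⇑(L f) ⁻¹' {0}ᶜ, ?_, (isOpen_compl_iff.mpr isClosed_singleton).preimage
        (L f).continuous, hρ⟩
      intro x hx
      simp only [Set.mem_preimage, Set.mem_compl_iff, Set.mem_singleton_iff] at hx
      by_contra hxV
      apply hx
      refine Lfiber φ L htr hone hpos x f (fun y hy => ?_)
      by_cases hyV : y ∈ V
      · exact absurd ⟨y, hyV, hy⟩ hxV
      · exact hfV y hyV
    rw [isLocalHomeomorph_iff_isOpenEmbedding_restrict]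
    intro y0
    have hGcont : Continuous fun q : X × X => ∑ i, u i q.1 * (starRingEnd ℂ) (u i q.2) := by
      refine continuous_finset_sum _ (fun i _ => ?_)
      exact ((u i).continuous.comp continuous_fst).mul
        (Complex.continuous_conj.comp ((u i).continuous.comp continuous_snd))
    have hG0 : (∑ i, u i y0 * (starRingEnd ℂ) (u i y0)) ≠ 0 := by
      obtain ⟨f, hf1, hf0, -, hρ⟩ := hpeak y0 Set.univ isOpen_univ (Set.mem_univ _)
      have hg := gkey φ L htr hone hpos hqb (φ y0) y0 rfl f hf1 hf0 y0 rfl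
      rw [hf1] at hg
      intro h0
      rw [h0, zero_mul] at hg
      exact one_ne_zero hg.symm
    have hSmem : {q : X × X | (∑ i, u i q.1 * (starRingEnd ℂ) (u i q.2)) ≠ 0} ∈
        nhds (y0, y0) := by
      refine IsOpen.mem_nhds ?_ hG0
      exact isOpen_compl_iff.mpr (isClosed_singleton.preimage hGcont)
    rw [mem_nhds_prod_iff'] at hSmem
    obtain ⟨U1, U2, hU1, hy1, hU2, hy2, hUsub⟩ := hSmem
    refine ⟨U1 ∩ U2, (hU1.inter hU2).mem_nhds ⟨hy1, hy2⟩, ?_⟩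
    refine .of_continuous_injective_isOpenMap
      (φ.continuous.comp continuous_subtype_val) ?_ (hopen.restrict (hU1.inter hU2))
    rintro ⟨a, ha⟩ ⟨b, hb⟩ hab
    simp only [Set.restrict_apply] at hab
    ext
    by_contra hne
    obtain ⟨f, hf1, hf0, -, hρ⟩ := hpeak b Set.univ isOpen_univ (Set.mem_univ _)
    have hg := gkey φ L htr hone hpos hqb (φ b) b rfl f hf1 hf0 a hab
    rw [hf0 a hab hne, mul_eq_zero] at hg
    rcases hg with hg | hg
    · exact hUsub (Set.mk_mem_prod ha.1 hb.2) hg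
    · exact hρ hg
  -- uniqueness
  · intro ψ hψ
    obtain ⟨-, -, htrψ⟩ := hψ
    ext p
    by_contra hne
    obtain ⟨f0, hf01, hf00, -, hρ⟩ := hpeak p Set.univ isOpen_univ (Set.mem_univ _)
    have hkey : ∀ f : C(X, ℂ), f (ψ p) = f (φ p) := by
      intro f
      have h1 : L (f.comp ψ * f0) (φ p) = f (φ p) * L f0 (φ p) := by
        rw [htrψ f f0]
        simp
      have h2 : L (f.comp ψ * f0) (φ p) = f (ψ p) * L f0 (φ p) := by
        have := Leq φ L htr hone hpos (φ p) (f.comp ψ * f0) (f (ψ p) • f0)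
          (fun y hy => by
            by_cases hyp : y = p
            · subst hyp
              simp [hf01]
            · simp [hf00 y hy hyp])
        rw [this, map_smul]
        simp
      rw [h1] at h2
      exact mul_right_cancel₀ hρ h2.symm
    obtain ⟨g, hg0, hg1, -⟩ := exists_continuous_zero_one_of_isClosed
      (isClosed_singleton (x := ψ p)) (isClosed_singleton (x := φ p))
      (Set.disjoint_singleton.mpr hne)
    have := hkey (cmplx g)
    rw [cmplx_apply, cmplx_apply, hg0 rfl, hg1 rfl] at this
    exact zero_ne_one (by exact_mod_cast this)
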